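/- Let R be a ring and A a left R-module. Every natural transformation from the functor Hom(A,-) modulo injectives, M ↦ Hom_R(A,M)/I(A,M), to the forgetful functor Hom(R,-) is zero. Equivalently, any natural transformation β : Hom(A,-) ⟶ Hom(R,-) of additive functors that vanishes on all homomorphisms factoring through an injective module is the zero transformation. -/

import Mathlib

open CategoryTheory Opposite

universe u

variable {R : Type u} [Ring R]

theorem injective_punit : Module.Injective R PUnit.{u + 1} := by
  constructor
  intro X Y _ _ _ _ f hf g
  exact ⟨0, fun x => Subsingleton.elim _ _⟩

theorem injective_prod {P Q : Type u} [AddCommGroup P] [AddCommGroup Q] [Module R P]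
    [Module R Q] (hP : Module.Injective R P) (hQ : Module.Injective R Q) :
    Module.Injective R (P × Q) := by
  constructor
  intro X Y _ _ _ _ f hf g
  obtain ⟨h₁, hh₁⟩ := hP.out f hf (LinearMap.fst R P Q ∘ₗ g)
  obtain ⟨h₂, hh₂⟩ := hQ.out f hf (LinearMap.snd R P Q ∘ₗ g)
  refine ⟨LinearMap.prod h₁ h₂, fun x => Prod.ext ?_ ?_⟩
  · simpa using hh₁ x
  · simpa using hh₂ x

/-- A homomorphism factors through an injective module. -/
def FactorsThroughInjective {A M : ModuleCat.{u} R} (g : A ⟶ M) : Prop :=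
  ∃ (E : ModuleCat.{u} R) (p : A ⟶ E) (q : E ⟶ M), Module.Injective R E ∧ p ≫ q = g

/-- The subgroup of maps factoring through an injective. -/
def injSub (A M : ModuleCat.{u} R) : AddSubgroup (A ⟶ M) where
  carrier := {g | FactorsThroughInjective g}
  zero_mem' := ⟨ModuleCat.of R PUnit, 0, 0, injective_punit, by simp⟩
  add_mem' := by
    rintro g₁ g₂ ⟨E₁, p₁, q₁, hE₁, h₁⟩ ⟨E₂, p₂, q₂, hE₂, h₂⟩
    refine ⟨ModuleCat.of R (E₁ × E₂), ModuleCat.ofHom (LinearMap.prod p₁.hom p₂.hom),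
      ModuleCat.ofHom (q₁.hom ∘ₗ LinearMap.fst R E₁ E₂ + q₂.hom ∘ₗ LinearMap.snd R E₁ E₂),
      injective_prod hE₁ hE₂, ?_⟩
    subst h₁ h₂
    ext a
    rfl
  neg_mem' := by
    rintro g ⟨E, p, q, hE, h⟩
    exact ⟨E, p, -q, hE, by rw [← h]; simp⟩

def postcompHom {A M N : ModuleCat.{u} R} (f : M ⟶ N) :
    (A ⟶ M) →+ (A ⟶ N) :=
  AddMonoidHom.mk' (fun g => g ≫ f) (fun g₁ g₂ => by simp [Preadditive.add_comp])

/-- The Hom functor `Hom(A,-)` modulo injectives. -/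
def injStableHomFunctor (A : ModuleCat.{u} R) : ModuleCat.{u} R ⥤ AddCommGrpCat.{u} where
  obj M := AddCommGrpCat.of ((A ⟶ M) ⧸ injSub A M)
  map {M N} f := AddCommGrpCat.ofHom (QuotientAddGroup.map _ _ (postcompHom f)
    (by rintro g ⟨E, p, q, hE, h⟩; exact ⟨E, p, q ≫ f, hE, by rw [← h]; simp [postcompHom]⟩))
  map_id M := by
    ext x
    simp [postcompHom]
  map_comp {M N K} f g := by
    ext x
    simp [postcompHom]

/-- The forgetful functor `Hom(R,-)`. -/
def forgetfulFunctor (R : Type u) [Ring R] : ModuleCat.{u} R ⥤ AddCommGrpCat.{u} :=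
  preadditiveCoyoneda.obj (op (ModuleCat.of R R))

/-- every natural transformation from the covariant Hom functor modulo
injectives `M ↦ Hom(A,M)/I(A,M)` to the forgetful functor `Hom(R,-)` is zero.
Equivalently, a natural transformation `β : Hom(A,-) ⟶ Hom(R,-)` vanishing on all
homomorphisms that factor through an injective module is the zero transformation. -/
theorem statement3 (R : Type u) [Ring R] (A : ModuleCat.{u} R) :
    (∀ α : injStableHomFunctor A ⟶ forgetfulFunctor R, α = 0) ∧
    (∀ β : preadditiveCoyoneda.obj (op A) ⟶ forgetfulFunctor R,
      (∀ (M : ModuleCat.{u} R) (g : A ⟶ M),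
        FactorsThroughInjective g → β.app M g = 0) → β = 0) := by
  have key : ∀ β : preadditiveCoyoneda.obj (op A) ⟶ forgetfulFunctor R,
      (∀ (M : ModuleCat.{u} R) (g : A ⟶ M),
        FactorsThroughInjective g → β.app M g = 0) → β = 0 := by
    intro β hβ
    have hnat : ∀ (M : ModuleCat.{u} R) (g : A ⟶ M),
        β.app M g = β.app A (𝟙 A) ≫ g := by
      intro M g
      have h := ConcreteCategory.congr_hom (β.naturality g) (𝟙 A)
      have h2 : β.app M (𝟙 A ≫ g) = β.app A (𝟙 A) ≫ g := h
      rwa [Category.id_comp] at h2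
    let E : ModuleCat.{u} R := CategoryTheory.Injective.under A
    have hE : CategoryTheory.Injective E := CategoryTheory.Injective.injective_under A
    have hEmod : Module.Injective R E :=
      Module.injective_module_of_injective_object R E (inj := hE)
    have hι : β.app E (CategoryTheory.Injective.ι A) = 0 :=
      hβ _ _ ⟨E, CategoryTheory.Injective.ι A, 𝟙 _, hEmod, by simp⟩
    rw [hnat] at hι
    have hzero : β.app A (𝟙 A) = 0 := by
      have : β.app A (𝟙 A) ≫ CategoryTheory.Injective.ι A = (0 : _ ⟶ _) ≫ CategoryTheory.Injective.ι A := by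
        rw [Limits.zero_comp]; exact hι
      exact (cancel_mono (CategoryTheory.Injective.ι A)).mp this
    ext M g
    refine (hnat M g).trans ?_; rw [hzero]
    simp; exact Limits.zero_comp
  refine ⟨?_, key⟩
  intro α
  let π : ∀ M : ModuleCat.{u} R,
      (preadditiveCoyoneda.obj (op A)).obj M ⟶ (injStableHomFunctor A).obj M :=
    fun M => AddCommGrpCat.ofHom (QuotientAddGroup.mk' (injSub A M))
  have πnat : ∀ {M N : ModuleCat.{u} R} (f : M ⟶ N),
      (preadditiveCoyoneda.obj (op A)).map f ≫ π N = π M ≫ (injStableHomFunctor A).map f := by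
    intro M N f
    ext g
    rfl
  let β : preadditiveCoyoneda.obj (op A) ⟶ forgetfulFunctor R :=
    { app := fun M => π M ≫ α.app M
      naturality := by
        intro M N f
        rw [← Category.assoc, πnat, Category.assoc, α.naturality, Category.assoc] }
  have hβ : β = 0 := by
    apply key
    intro M g hg
    have : (π M) g = 0 := (QuotientAddGroup.eq_zero_iff (N := injSub A M) g).mpr hg
    show (α.app M) ((π M) g) = 0
    rw [this]
    simp
  ext M x
  induction x using QuotientAddGroup.induction_on with
  | H g =>
    have := ConcreteCategory.congr_hom (C := AddCommGrpCat) (congrArg (fun n : preadditiveCoyoneda.obj (op A) ⟶ forgetfulFunctor R => n.app M) hβ) g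
    exact this
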